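/- Let H be a complex Hilbert space and A a bounded invertible operator on H with ‖A‖ < R and ‖A⁻¹‖ < R, where R > 1 and r = 1/R. Let A = UG be the polar decomposition with U unitary and G positive definite self-adjoint. Then for every θ ∈ ℝ, Re M(θ,A*) ≥ N(θ), where M(θ,A*) = (2π/(R² − r²))·(R² + r² − (e^{iθ}A*)⁻¹ − e^{iθ}A*) and N(θ) = (2π/(R² − r²))·((R² + r² − R − r) + ((R + r + 2)/4)(2 − e^{iθ}U* − e^{−iθ}U)), and N(θ) is a positive definite invertible operator. -/

import Mathlib

set_option maxHeartbeats 1000000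


open Complex ContinuousLinearMap

/-- `M(θ, A*)` from the decomposition lemma. -/
noncomputable def Mop {H : Type*} [NormedAddCommGroup H] [InnerProductSpace ℂ H]
    [CompleteSpace H] (R r θ : ℝ) (A : H →L[ℂ] H) : H →L[ℂ] H :=
  (((2 * Real.pi) / (R ^ 2 - r ^ 2) : ℝ) : ℂ) •
    (((R ^ 2 + r ^ 2 : ℝ) : ℂ) • (1 : H →L[ℂ] H) -
      Ring.inverse (Complex.exp ((θ : ℂ) * Complex.I) • ContinuousLinearMap.adjoint A) -
      Complex.exp ((θ : ℂ) * Complex.I) • ContinuousLinearMap.adjoint A)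

/-- `N(θ)` from Lemma 4.1, built from the unitary part `U` of `A`. -/
noncomputable def Nop {H : Type*} [NormedAddCommGroup H] [InnerProductSpace ℂ H]
    [CompleteSpace H] (R r θ : ℝ) (U : H →L[ℂ] H) : H →L[ℂ] H :=
  (((2 * Real.pi) / (R ^ 2 - r ^ 2) : ℝ) : ℂ) •
    (((R ^ 2 + r ^ 2 - R - r : ℝ) : ℂ) • (1 : H →L[ℂ] H) +
      (((R + r + 2) / 4 : ℝ) : ℂ) •
        ((2 : ℂ) • (1 : H →L[ℂ] H) -
          Complex.exp ((θ : ℂ) * Complex.I) • ContinuousLinearMap.adjoint U -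
          Complex.exp (-(θ : ℂ) * Complex.I) • U))

section Aux

variable {H : Type*} [NormedAddCommGroup H] [InnerProductSpace ℂ H] [CompleteSpace H]

private lemma alg_selfAdj (t : ℝ) : star (algebraMap ℝ (H →L[ℂ] H) t) = algebraMap ℝ _ t := by
  simp [Algebra.algebraMap_eq_smul_one]

private lemma alg_nonneg {t : ℝ} (ht : 0 ≤ t) : (0 : H →L[ℂ] H) ≤ algebraMap ℝ _ t := by
  have h : algebraMap ℝ (H →L[ℂ] H) t
      = star (algebraMap ℝ _ (Real.sqrt t)) * algebraMap ℝ _ (Real.sqrt t) := by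
    rw [alg_selfAdj, ← map_mul, Real.mul_self_sqrt ht]
  rw [h]
  exact star_mul_self_nonneg _

private lemma rsmul_nonneg {t : ℝ} (ht : 0 ≤ t) {x : H →L[ℂ] H} (hx : 0 ≤ x) :
    0 ≤ t • x := by
  have h : t • x = star (algebraMap ℝ (H →L[ℂ] H) (Real.sqrt t)) * x
      * algebraMap ℝ _ (Real.sqrt t) := by
    rw [alg_selfAdj]
    rw [Algebra.algebraMap_eq_smul_one, smul_mul_assoc, mul_smul_comm, one_mul, mul_one,
      smul_smul, Real.mul_self_sqrt ht]
  rw [h]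
  exact star_left_conjugate_nonneg hx _

end Aux

theorem stmt_5 {H : Type*} [NormedAddCommGroup H] [InnerProductSpace ℂ H] [CompleteSpace H]
    (R : ℝ) (hR : 1 < R) (r : ℝ) (hr : r = 1 / R)
    (A U G : H →L[ℂ] H) (hAunit : IsUnit A)
    (hAnorm : ‖A‖ < R) (hAinv : ‖Ring.inverse A‖ < R)
    (hU : U ∈ unitary (H →L[ℂ] H)) (hG : G.IsPositive) (hGunit : IsUnit G)
    (hpolar : A = U * G) (θ : ℝ) :
    (((2 : ℂ)⁻¹ • (Mop R r θ A + ContinuousLinearMap.adjoint (Mop R r θ A)) -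
        Nop R r θ U).IsPositive) ∧
      (Nop R r θ U).IsPositive ∧ IsUnit (Nop R r θ U) := by
  -- scalars
  have hR0 : (0:ℝ) < R := lt_trans one_pos hR
  have hr0 : (0:ℝ) < r := by rw [hr]; positivity
  have hrR : r * R = 1 := by rw [hr]; field_simp
  have hrlt1 : r < 1 := by rw [hr]; rw [div_lt_one hR0]; exact hR
  set c : ℝ := (2 * Real.pi) / (R ^ 2 - r ^ 2) with hc_def
  have hc0 : 0 < c := by
    apply div_pos (by positivity)
    nlinarith
  have hRr2 : 2 ≤ R + r := by nlinarith [sq_nonneg (R - 1)]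
  set av : ℝ := (R + r - 2) / 2 with hav_def
  have hav0 : 0 ≤ av := by rw [hav_def]; linarith
  set q : ℝ := (R + r + 2) / 2 with hq_def
  set b : ℝ := R ^ 2 + r ^ 2 - R - r with hb_def
  have hb0 : 0 < b := by
    rw [hb_def]; nlinarith [mul_pos hr0 (sub_pos.2 hrlt1), mul_pos hR0 (sub_pos.2 hR)]
  set e : ℂ := Complex.exp ((θ : ℂ) * Complex.I) with he_def
  set f : ℂ := Complex.exp (-(θ : ℂ) * Complex.I) with hf_def
  have hef : e * f = 1 := by
    rw [he_def, hf_def, ← Complex.exp_add]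
    ring_nf
    exact Complex.exp_zero
  have hstare : starRingEnd ℂ e = f := by
    rw [he_def, hf_def, ← Complex.exp_conj]
    congr 1
    simp
  have hstarf : starRingEnd ℂ f = e := by
    rw [hf_def, he_def, ← Complex.exp_conj]
    congr 1
    simp
  have hfabs : ‖f‖ = 1 := by
    rw [hf_def, Complex.norm_exp]
    simp
  -- operator basics
  have hGsa : IsSelfAdjoint G := hG.isSelfAdjoint
  have hG0 : (0:H →L[ℂ] H) ≤ G := (ContinuousLinearMap.nonneg_iff_isPositive G).mpr hG
  obtain ⟨hUU, hUU'⟩ := Unitary.mem_iff.mp hU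
  have hUnorm : ‖U‖ ≤ 1 := by
    have h1 : ‖star U * U‖ = ‖U‖ * ‖U‖ := CStarRing.norm_star_mul_self
    rw [hUU] at h1
    have h2 : ‖(1 : H →L[ℂ] H)‖ ≤ 1 := by
      rw [ContinuousLinearMap.one_def]; exact ContinuousLinearMap.norm_id_le
    nlinarith [norm_nonneg U]
  set Gu : (H →L[ℂ] H)ˣ := hGunit.unit with hGu_def
  have hGu : (Gu : H →L[ℂ] H) = G := hGunit.unit_spec
  set Gi : H →L[ℂ] H := ((Gu⁻¹ : (H →L[ℂ] H)ˣ) : H →L[ℂ] H) with hGi_def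
  have hGGi : G * Gi = 1 := by rw [hGi_def, ← hGu]; exact Gu.mul_inv
  have hGiG : Gi * G = 1 := by rw [hGi_def, ← hGu]; exact Gu.inv_mul
  have hGi0 : (0:H →L[ℂ] H) ≤ Gi := CFC.inv_nonneg_of_nonneg Gu (hGu ▸ hG0)
  have hGisa : IsSelfAdjoint Gi := .of_nonneg hGi0
  -- Ring.inverse A
  have hAi : Ring.inverse A = Gi * star U := by
    have h1 : A * (Gi * star U) = 1 := by
      rw [hpolar, mul_assoc, ← mul_assoc G, hGGi, one_mul, hUU']
    have h2 : (Gi * star U) * A = 1 := by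
      rw [hpolar, mul_assoc, ← mul_assoc (star U), hUU, one_mul, hGiG]
    exact Ring.inverse_unit ⟨A, Gi * star U, h1, h2⟩
  -- norm bounds on G, Gi
  have hGnorm : ‖G‖ < R := by
    have h1 : star U * A = G := by rw [hpolar, ← mul_assoc, hUU, one_mul]
    calc ‖G‖ = ‖star U * A‖ := by rw [h1]
    _ ≤ ‖star U‖ * ‖A‖ := norm_mul_le _ _
    _ ≤ 1 * ‖A‖ := by
        apply mul_le_mul_of_nonneg_right _ (norm_nonneg A)
        rwa [norm_star]
    _ < R := by rwa [one_mul]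
  have hGinorm : ‖Gi‖ < R := by
    have h1 : Ring.inverse A * U = Gi := by rw [hAi, mul_assoc, hUU, mul_one]
    calc ‖Gi‖ = ‖Ring.inverse A * U‖ := by rw [h1]
    _ ≤ ‖Ring.inverse A‖ * ‖U‖ := norm_mul_le _ _
    _ ≤ ‖Ring.inverse A‖ * 1 := mul_le_mul_of_nonneg_left hUnorm (norm_nonneg _)
    _ < R := by rwa [mul_one]
  have hGle : G ≤ algebraMap ℝ _ R :=
    (CStarAlgebra.norm_le_iff_le_algebraMap G hR0.le hG0).mp hGnorm.le
  have hGile : Gi ≤ algebraMap ℝ _ R :=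
    (CStarAlgebra.norm_le_iff_le_algebraMap Gi hR0.le hGi0).mp hGinorm.le
  -- lower bound r • 1 ≤ G
  set Ru : (H →L[ℂ] H)ˣ :=
    Units.map (algebraMap ℝ (H →L[ℂ] H)).toMonoidHom (Units.mk0 R hR0.ne') with hRu_def
  have hRu : (Ru : H →L[ℂ] H) = algebraMap ℝ _ R := rfl
  have hRuinv : ((Ru⁻¹ : _ˣ) : H →L[ℂ] H) = algebraMap ℝ _ r := by
    have h : Ru⁻¹ = Units.map (algebraMap ℝ (H →L[ℂ] H)).toMonoidHom (Units.mk0 R hR0.ne')⁻¹ :=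
      (MonoidHom.map_inv _ _).symm
    rw [h, hr]
    simp
  have hrleG : algebraMap ℝ (H →L[ℂ] H) r ≤ G := by
    have h1 : ((Gu⁻¹ : _ˣ) : H →L[ℂ] H) ≤ ↑Ru := by rw [hRu, ← hGi_def]; exact hGile
    have h2 := (CStarAlgebra.inv_le_iff (a := Gu) (b := Ru) (hGu ▸ hG0)
      (hRu ▸ alg_nonneg hR0.le)).mp h1
    rwa [hRuinv, hGu] at h2
  -- spectrum of G
  have hspec : spectrum ℝ G ⊆ Set.Icc r R := fun x hx =>
    ⟨(algebraMap_le_iff_le_spectrum hGsa).mp hrleG x hx,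
     (le_algebraMap_iff_spectrum_le hGsa).mp hGle x hx⟩
  have hspec0 : ∀ x ∈ spectrum ℝ G, x ≠ 0 := fun x hx =>
    (lt_of_lt_of_le hr0 (hspec hx).1).ne'
  have hcont1 : ContinuousOn (fun t : ℝ => t) (spectrum ℝ G) := by fun_prop
  have hcont : ContinuousOn (fun t : ℝ => t⁻¹) (spectrum ℝ G) :=
    ContinuousOn.inv₀ hcont1 hspec0
  have hKcfc : cfc (fun t : ℝ => t + t⁻¹) G = G + Gi := by
    rw [cfc_add (a := G) (fun t : ℝ => t) (fun t : ℝ => t⁻¹) (hf := hcont1) (hg := hcont)]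
    congr 1
    · exact cfc_id' ℝ G
    · rw [hGi_def, ← hGu]
      exact cfc_inv_id Gu (ha := hGu.symm ▸ hGsa)
  have hK2 : algebraMap ℝ (H →L[ℂ] H) 2 ≤ G + Gi := by
    rw [← hKcfc]
    apply algebraMap_le_cfc (fun t : ℝ => t + t⁻¹) _ _ (fun x hx => ?_) (hf := hcont1.add hcont) (ha := hGsa)
    have hx0 : 0 < x := lt_of_lt_of_le hr0 (hspec hx).1
    have h1 : x * x⁻¹ = 1 := mul_inv_cancel₀ hx0.ne'
    nlinarith [sq_nonneg (x - 1)]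
  have hKRr : G + Gi ≤ algebraMap ℝ (H →L[ℂ] H) (R + r) := by
    rw [← hKcfc]
    rw [cfc_le_algebraMap_iff (fun t : ℝ => t + t⁻¹) _ _ (hf := hcont1.add hcont) (ha := hGsa)]
    intro x hx
    have hx0 : 0 < x := lt_of_lt_of_le hr0 (hspec hx).1
    have h1 : x * x⁻¹ = 1 := mul_inv_cancel₀ hx0.ne'
    have h2 := (hspec hx).1
    have h3 := (hspec hx).2
    nlinarith [mul_nonneg (sub_nonneg.2 h3) (sub_nonneg.2 h2)]
  -- D and its norm
  set D : H →L[ℂ] H := algebraMap ℝ _ q - (G + Gi) with hD_def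
  have hDsa : IsSelfAdjoint D := by
    rw [hD_def]
    rw [IsSelfAdjoint, star_sub, alg_selfAdj, star_add, hGsa.star_eq, hGisa.star_eq]
  have hDnorm : ‖D‖ ≤ av := by
    have hDcfc : cfc (fun t : ℝ => q - (t + t⁻¹)) G = D := by
      rw [cfc_sub (a := G) (fun _ : ℝ => q) (fun t : ℝ => t + t⁻¹) (hf := continuousOn_const)
        (hg := hcont1.add hcont), hKcfc, cfc_const q G (ha := hGsa), hD_def]
    rw [← hDcfc]
    apply norm_cfc_le hav0 (fun x hx => ?_)
    have hx0 : 0 < x := lt_of_lt_of_le hr0 (hspec hx).1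
    have h1 : x * x⁻¹ = 1 := mul_inv_cancel₀ hx0.ne'
    have h2 := (hspec hx).1
    have h3 := (hspec hx).2
    rw [Real.norm_eq_abs, abs_le]
    constructor
    · rw [hav_def, hq_def]
      nlinarith [mul_nonneg (sub_nonneg.2 h3) (sub_nonneg.2 h2)]
    · rw [hav_def, hq_def]
      nlinarith [sq_nonneg (x - 1)]
  -- W
  set W : H →L[ℂ] H := (f • U) * D with hW_def
  have hWnorm : ‖W‖ ≤ av := by
    calc ‖W‖ ≤ ‖f • U‖ * ‖D‖ := norm_mul_le _ _
    _ ≤ 1 * av := by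
        apply mul_le_mul _ hDnorm (norm_nonneg D) zero_le_one
        rw [norm_smul]
        simp only [hfabs, one_mul]
        exact hUnorm
    _ = av := one_mul av
  have hWsa : IsSelfAdjoint (W + star W) := by
    rw [IsSelfAdjoint, star_add, star_star, add_comm]
  have hWWnorm : ‖W + star W‖ ≤ 2 * av := by
    calc ‖W + star W‖ ≤ ‖W‖ + ‖star W‖ := norm_add_le _ _
    _ = ‖W‖ + ‖W‖ := by rw [norm_star]
    _ ≤ 2 * av := by linarith
  have hlow : (0 : H →L[ℂ] H) ≤ W + star W + algebraMap ℝ _ (2 * av) := by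
    have h1 := IsSelfAdjoint.neg_algebraMap_norm_le_self hWsa
    have h2 : algebraMap ℝ (H →L[ℂ] H) ‖W + star W‖ ≤ algebraMap ℝ _ (2 * av) := by
      have h0 := alg_nonneg (H := H) (sub_nonneg.2 hWWnorm)
      rw [map_sub] at h0
      exact sub_nonneg.mp h0
    have h3 : -(algebraMap ℝ (H →L[ℂ] H) (2 * av)) ≤ W + star W :=
      le_trans (neg_le_neg h2) h1
    calc (0 : H →L[ℂ] H) = -(algebraMap ℝ _ (2 * av)) + algebraMap ℝ _ (2 * av) := by simp
    _ ≤ (W + star W) + algebraMap ℝ _ (2 * av) := add_le_add h3 le_rfl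
  -- identity for M
  have hGistar : star Gi = Gi := hGisa.star_eq
  have hGstar : star G = G := hGsa.star_eq
  have hAstar : star A = G * star U := by
    rw [hpolar, star_mul, hGstar]
  have hMinv : Ring.inverse (e • star A) = f • (U * Gi) := by
    have h1 : (e • star A) * (f • (U * Gi)) = 1 := by
      rw [hAstar, smul_mul_smul_comm, hef, one_smul, mul_assoc, ← mul_assoc (star U),
        hUU, one_mul, hGGi]
    have h2 : (f • (U * Gi)) * (e • star A) = 1 := by
      rw [hAstar, smul_mul_smul_comm, mul_comm f e, hef, one_smul, mul_assoc,
        ← mul_assoc Gi, hGiG, one_mul, hUU']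
    exact Ring.inverse_unit ⟨e • star A, f • (U * Gi), h1, h2⟩
  have hMeq : Mop R r θ A = (c : ℂ) •
      (((R ^ 2 + r ^ 2 : ℝ) : ℂ) • (1 : H →L[ℂ] H) - f • (U * Gi) - e • (G * star U)) := by
    rw [Mop, ← he_def, ← hc_def, ← ContinuousLinearMap.star_eq_adjoint, hMinv, hAstar]
  have hMstar : star (Mop R r θ A) = (c : ℂ) •
      (((R ^ 2 + r ^ 2 : ℝ) : ℂ) • (1 : H →L[ℂ] H) - e • (Gi * star U) - f • (U * G)) := by
    rw [hMeq]
    simp only [star_smul, star_sub, star_one, star_mul, star_star, hGistar, hGstar,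
      RCLike.star_def, hstare, hstarf, Complex.conj_ofReal]
  -- key identity
  have hkey : (2 : ℂ)⁻¹ • (Mop R r θ A + star (Mop R r θ A)) - Nop R r θ U
      = ((c / 2 : ℝ) : ℂ) • (W + star W + ((2 * av : ℝ) : ℂ) • (1 : H →L[ℂ] H)) := by
    have hWexp : W = (f * (q : ℂ)) • U - f • (U * G) - f • (U * Gi) := by
      rw [hW_def, hD_def, Algebra.algebraMap_eq_smul_one]
      simp only [mul_sub, mul_add, mul_smul_comm, mul_one, smul_mul_assoc]
      match_scalars <;> simp only [Complex.coe_algebraMap] <;> ring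
    have hWstar : star W = ((e * (q : ℂ)) • star U - e • (G * star U) - e • (Gi * star U)) := by
      rw [hWexp]
      simp only [star_sub, star_smul, star_mul, hGistar, hGstar, RCLike.star_def, hstarf,
        map_mul, Complex.conj_ofReal]
      module
    rw [hMstar, hMeq, hWstar, hWexp, Nop, ← he_def, ← hf_def, ← hc_def,
      ← ContinuousLinearMap.star_eq_adjoint]
    match_scalars <;> simp only [hc_def, hav_def, hq_def] <;> push_cast <;> ring
  -- part 1
  have hpart1 : ((2 : ℂ)⁻¹ • (Mop R r θ A + ContinuousLinearMap.adjoint (Mop R r θ A)) -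
      Nop R r θ U).IsPositive := by
    rw [← ContinuousLinearMap.nonneg_iff_isPositive, ← ContinuousLinearMap.star_eq_adjoint, hkey]
    rw [Complex.coe_smul, Complex.coe_smul]
    refine rsmul_nonneg (by positivity) ?_
    have h4 := hlow
    rw [Algebra.algebraMap_eq_smul_one] at h4
    exact h4
  -- part 2 : N positive and unit
  have hSeq : star ((1 : H →L[ℂ] H) - f • U) * ((1 : H →L[ℂ] H) - f • U)
      = (2 : ℂ) • (1 : H →L[ℂ] H) - e • star U - f • U := by
    have h1 : star ((1 : H →L[ℂ] H) - f • U) = 1 - e • star U := by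
      simp only [star_sub, star_one, star_smul, RCLike.star_def, hstarf]
    rw [h1]
    simp only [sub_mul, mul_sub, one_mul, mul_one, smul_mul_smul_comm, hef, hUU, one_smul]
    module
  have hNeq : Nop R r θ U = ((c * b : ℝ) : ℂ) • (1 : H →L[ℂ] H) +
      ((c * ((R + r + 2) / 4) : ℝ) : ℂ) •
        (star ((1 : H →L[ℂ] H) - f • U) * ((1 : H →L[ℂ] H) - f • U)) := by
    rw [hSeq, Nop, ← he_def, ← hf_def, ← hc_def, ← ContinuousLinearMap.star_eq_adjoint]
    match_scalars <;> simp only [hc_def, hb_def] <;> push_cast <;> ring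
  have hd0 : (0:ℝ) ≤ c * ((R + r + 2) / 4) := by positivity
  have hNge : algebraMap ℝ (H →L[ℂ] H) (c * b) ≤ Nop R r θ U := by
    rw [hNeq, Algebra.algebraMap_eq_smul_one, Complex.coe_smul, Complex.coe_smul]
    have h0 : (0:H →L[ℂ] H) ≤ (c * ((R + r + 2) / 4)) •
        (star ((1 : H →L[ℂ] H) - f • U) * ((1 : H →L[ℂ] H) - f • U)) :=
      rsmul_nonneg hd0 (star_mul_self_nonneg _)
    exact le_add_of_nonneg_right h0
  have hcb0 : (0:ℝ) < c * b := mul_pos hc0 hb0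
  refine ⟨hpart1, ?_, ?_⟩
  · rw [← ContinuousLinearMap.nonneg_iff_isPositive]
    exact le_trans (alg_nonneg hcb0.le) hNge
  · exact CStarAlgebra.isUnit_of_le _ hNge (isStrictlyPositive_algebraMap hcb0)
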